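/- Let S be a Polish space and let c : S × S → [0,∞) satisfy c(x,x) = 0 for all x ∈ S, and suppose there is a sequence of lower semicontinuous functions c_n : S × S → [0,∞) with c_n ↓ c pointwise. Let g = Σ_{i=1}^r b_i 𝟏_{K_i}, where b_1, …, b_r ≥ 0 and K_1, …, K_r ⊆ S are pairwise disjoint compact sets. Then the c-transform g^c(x) := inf_{y ∈ S} (c(x,y) − g(y)) is Borel measurable. -/

import Mathlib

open MeasureTheory

private lemma lsc_min_sub_const {S : Type*} [TopologicalSpace S] {f : S → ℝ}
    (hf : LowerSemicontinuous f) (a : ℝ) :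
    LowerSemicontinuous fun p => min (f p - a) 0 := by
  intro p t ht
  change t < min (f p - a) 0 at ht
  rw [lt_min_iff] at ht
  obtain ⟨h1, h2⟩ := ht
  filter_upwards [hf p (t + a) (by linarith)] with q hq
  show t < min (f q - a) 0
  rw [lt_min_iff]
  exact ⟨by linarith, h2⟩

private lemma lsc_ciInf_compact {S : Type*} [TopologicalSpace S]
    {f : S × S → ℝ} (hf : LowerSemicontinuous f) {K : Set S} (hK : IsCompact K)
    (hne : K.Nonempty) {B : ℝ} (hB : ∀ p, B ≤ f p) :
    LowerSemicontinuous fun x => ⨅ y : K, f (x, (y : S)) := by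
  have hKne : Nonempty K := hne.to_subtype
  intro x0 t ht
  obtain ⟨t', ht1, ht2⟩ := exists_between ht
  have hopen : IsOpen {p : S × S | t' < f p} := hf.isOpen_preimage t'
  have hsub : ({x0} ×ˢ K : Set (S × S)) ⊆ {p | t' < f p} := by
    rintro ⟨x, y⟩ ⟨hx, hy⟩
    have hx' : x = x0 := hx
    have hb : BddBelow (Set.range fun z : K => f (x0, (z : S))) :=
      ⟨B, by rintro _ ⟨z, rfl⟩; exact hB _⟩
    have hle : (⨅ z : K, f (x0, (z : S))) ≤ f (x0, y) := ciInf_le hb ⟨y, hy⟩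
    simpa [hx'] using lt_of_lt_of_le ht2 hle
  obtain ⟨u, v, hu, hv, hx0u, hKv, huv⟩ :=
    generalized_tube_lemma isCompact_singleton hK hopen hsub
  filter_upwards [hu.mem_nhds (hx0u rfl)] with x hx
  have : t' ≤ ⨅ y : K, f (x, (y : S)) :=
    le_ciInf fun y => le_of_lt (huv ⟨hx, hKv y.2⟩)
  exact lt_of_lt_of_le ht1 this

/-- If `c` is a non-increasing pointwise limit of lower semicontinuous nonnegative
functions vanishing on the diagonal, and `g` is a nonnegative simple function built
from pairwise disjoint compact sets, then the `c`-transform of `g` is Borel measurable. -/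
theorem cTransform_simple_compact_measurable
    {S : Type*} [TopologicalSpace S] [PolishSpace S] [MeasurableSpace S] [BorelSpace S]
    (c : S × S → ℝ) (hc0 : ∀ p, 0 ≤ c p) (hdiag : ∀ x : S, c (x, x) = 0)
    (cn : ℕ → S × S → ℝ) (hlsc : ∀ n, LowerSemicontinuous (cn n))
    (hn0 : ∀ n p, 0 ≤ cn n p)
    (hmono : ∀ p, Antitone fun n => cn n p)
    (hlim : ∀ p, Filter.Tendsto (fun n => cn n p) Filter.atTop (nhds (c p)))
    (r : ℕ) (b : Fin r → ℝ) (hb : ∀ i, 0 ≤ b i)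
    (K : Fin r → Set S) (hK : ∀ i, IsCompact (K i))
    (hdisj : Pairwise (Function.onFun Disjoint K))
    (g : S → ℝ) (hg : g = fun y => ∑ i, Set.indicator (K i) (fun _ => b i) y) :
    Measurable fun x : S => ⨅ y : S, (c (x, y) - g y) := by
  classical
  set M : ℝ := ∑ i, b i with hM
  have hM0 : 0 ≤ M := Finset.sum_nonneg fun i _ => hb i
  have hbM : ∀ i, b i ≤ M := fun i =>
    Finset.single_le_sum (fun j _ => hb j) (Finset.mem_univ i)
  have hg0 : ∀ y, 0 ≤ g y := by
    intro y; simp only [hg]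
    exact Finset.sum_nonneg fun i _ => Set.indicator_nonneg (fun _ _ => hb i) y
  have hgM : ∀ y, g y ≤ M := by
    intro y; simp only [hg, hM]
    refine Finset.sum_le_sum fun i _ => ?_
    exact Set.indicator_le' (fun _ _ => le_rfl) (fun _ _ => hb i) y
  have hgK : ∀ i, ∀ y ∈ K i, g y = b i := by
    intro i y hy
    simp only [hg]
    rw [Finset.sum_eq_single i]
    · simp [Set.indicator_of_mem hy]
    · intro j _ hj
      have hyj : y ∉ K j := fun hyj => Set.disjoint_left.mp (hdisj hj) hyj hy
      simp [Set.indicator_of_notMem hyj]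
    · intro h; exact absurd (Finset.mem_univ i) h
  -- the approximating functions
  set E : ℕ → Fin r → S → ℝ :=
    fun n i x => ⨅ y : K i, min (cn n (x, (y : S)) - b i) 0 with hE
  -- lower bounds
  have hφM : ∀ n x y, -M ≤ min (cn n (x, y) - g y) 0 :=
    fun n x y => le_min (by have := hn0 n (x, y); have := hgM y; linarith) (by linarith)
  have hψM : ∀ n i (p : S × S), -M ≤ min (cn n p - b i) 0 :=
    fun n i p => le_min (by have := hn0 n p; have := hbM i; linarith) (by linarith)
  have hf0M : ∀ x y, -M ≤ c (x, y) - g y :=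
    fun x y => by have := hc0 (x, y); have := hgM y; linarith
  -- pointwise identification
  have key : (fun x : S => ⨅ y : S, (c (x, y) - g y))
      = fun x : S => ⨅ n : ℕ, min 0 (⨅ i, E n i x) := by
    funext x
    have hSne : Nonempty S := ⟨x⟩
    have bdd0 : BddBelow (Set.range fun y : S => c (x, y) - g y) :=
      ⟨-M, by rintro _ ⟨y, rfl⟩; exact hf0M x y⟩
    have bddφ : ∀ n, BddBelow (Set.range fun y : S => min (cn n (x, y) - g y) 0) :=
      fun n => ⟨-M, by rintro _ ⟨y, rfl⟩; exact hφM n x y⟩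
    have bddmin : BddBelow (Set.range fun y : S => min (c (x, y) - g y) 0) := by
      refine ⟨-M, ?_⟩
      rintro _ ⟨y, rfl⟩
      exact le_min (by have := hc0 (x, y); have := hgM y; linarith) (by linarith)
    -- Step A
    have stepA : (⨅ y : S, (c (x, y) - g y)) = ⨅ y : S, min (c (x, y) - g y) 0 := by
      apply le_antisymm
      · refine le_ciInf fun y => le_min (ciInf_le bdd0 y) ?_
        refine le_trans (ciInf_le bdd0 x) ?_
        rw [hdiag x]
        have := hg0 x; linarith
      · exact le_ciInf fun y => le_trans (ciInf_le bddmin y) (min_le_left _ _)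
    -- Step B : pointwise limit
    have stepB : ∀ y : S, min (c (x, y) - g y) 0
        = ⨅ n : ℕ, min (cn n (x, y) - g y) 0 := by
      intro y
      have hanti : Antitone fun n => min (cn n (x, y) - g y) 0 := fun m n hmn =>
        min_le_min (sub_le_sub_right (hmono (x, y) hmn) (g y)) le_rfl
      have hbdd : BddBelow (Set.range fun n => min (cn n (x, y) - g y) 0) :=
        ⟨-M, by rintro _ ⟨n, rfl⟩; exact hφM n x y⟩
      have h1 : Filter.Tendsto (fun n => min (cn n (x, y) - g y) 0) Filter.atTop
          (nhds (min (c (x, y) - g y) 0)) :=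
        Filter.Tendsto.min ((hlim (x, y)).sub_const (g y)) tendsto_const_nhds
      have h2 := tendsto_atTop_ciInf hanti hbdd
      exact tendsto_nhds_unique h1 h2
    -- Step C : swap the infima
    have bddn : ∀ y : S, BddBelow (Set.range fun n : ℕ => min (cn n (x, y) - g y) 0) :=
      fun y => ⟨-M, by rintro _ ⟨n, rfl⟩; exact hφM n x y⟩
    have bddyinf : BddBelow (Set.range fun y : S =>
        ⨅ n : ℕ, min (cn n (x, y) - g y) 0) :=
      ⟨-M, by rintro _ ⟨y, rfl⟩; exact le_ciInf fun n => hφM n x y⟩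
    have bddninf : BddBelow (Set.range fun n : ℕ =>
        ⨅ y : S, min (cn n (x, y) - g y) 0) :=
      ⟨-M, by rintro _ ⟨n, rfl⟩; exact le_ciInf fun y => hφM n x y⟩
    have stepC : (⨅ y : S, ⨅ n : ℕ, min (cn n (x, y) - g y) 0)
        = ⨅ n : ℕ, ⨅ y : S, min (cn n (x, y) - g y) 0 := by
      apply le_antisymm
      · exact le_ciInf fun n => le_ciInf fun y =>
          le_trans (ciInf_le bddyinf y) (ciInf_le (bddn y) n)
      · exact le_ciInf fun y => le_ciInf fun n =>
          le_trans (ciInf_le bddninf n) (ciInf_le (bddφ n) y)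
    -- Step D : identify the inner infimum
    have stepD : ∀ n : ℕ, (⨅ y : S, min (cn n (x, y) - g y) 0)
        = min 0 (⨅ i, E n i x) := by
      intro n
      have bddE : BddBelow (Set.range fun i : Fin r => E n i x) :=
        (Set.finite_range _).bddBelow
      apply le_antisymm
      · refine le_min ?_ ?_
        · exact le_trans (ciInf_le (bddφ n) x) (min_le_right _ _)
        · rcases isEmpty_or_nonempty (Fin r) with hr | hr
          · have hz0 : (⨅ i, E n i x) = 0 := by rw [iInf_of_isEmpty, Real.sInf_empty]
            rw [hz0]
            exact le_trans (ciInf_le (bddφ n) x) (min_le_right _ _)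
          refine le_ciInf fun i => ?_
          by_cases h : (K i).Nonempty
          · have : Nonempty (K i) := h.to_subtype
            simp only [hE]
            refine le_ciInf fun y => ?_
            have h1 := ciInf_le (bddφ n) (y : S)
            rwa [hgK i y.1 y.2] at h1
          · have hie : IsEmpty (K i) :=
              Set.isEmpty_coe_sort.mpr (Set.not_nonempty_iff_eq_empty.mp h)
            have hEz : E n i x = 0 := by
              simp only [hE]
              rw [iInf_of_isEmpty, Real.sInf_empty]
            rw [hEz]
            exact le_trans (ciInf_le (bddφ n) x) (min_le_right _ _)
      · refine le_ciInf fun y => ?_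
        by_cases hy : ∃ i, y ∈ K i
        · obtain ⟨i, hyi⟩ := hy
          have bddKi : BddBelow (Set.range fun z : K i =>
              min (cn n (x, (z : S)) - b i) 0) :=
            ⟨-M, by rintro _ ⟨z, rfl⟩; exact hψM n i _⟩
          have h1 : E n i x ≤ min (cn n (x, y) - b i) 0 := by
            simp only [hE]
            exact ciInf_le bddKi ⟨y, hyi⟩
          rw [hgK i y hyi]
          exact le_trans (min_le_right _ _) (le_trans (ciInf_le bddE i) h1)
        · push_neg at hy
          have hgy : g y = 0 := by
            simp only [hg]
            refine Finset.sum_eq_zero fun i _ => ?_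
            simp [Set.indicator_of_notMem (hy i)]
          rw [hgy, sub_zero, min_eq_right (hn0 n (x, y))]
          exact min_le_left _ _
    rw [stepA]
    calc (⨅ y : S, min (c (x, y) - g y) 0)
        = ⨅ y : S, ⨅ n : ℕ, min (cn n (x, y) - g y) 0 := iInf_congr stepB
      _ = ⨅ n : ℕ, ⨅ y : S, min (cn n (x, y) - g y) 0 := stepC
      _ = ⨅ n : ℕ, min 0 (⨅ i, E n i x) := iInf_congr stepD
  rw [key]
  refine Measurable.iInf fun n => ?_
  refine Measurable.min measurable_const (Measurable.iInf fun i => ?_)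
  by_cases h : (K i).Nonempty
  · have hlsc' : LowerSemicontinuous fun p : S × S => min (cn n p - b i) 0 :=
      lsc_min_sub_const (hlsc n) (b i)
    simp only [hE]
    exact (lsc_ciInf_compact hlsc' (hK i) h (B := -M) (hψM n i)).measurable
  · have hie : IsEmpty (K i) :=
      Set.isEmpty_coe_sort.mpr (Set.not_nonempty_iff_eq_empty.mp h)
    have hz : E n i = fun _ => (0 : ℝ) := by
      funext x
      simp only [hE]
      rw [iInf_of_isEmpty, Real.sInf_empty]
    rw [hz]
    exact measurable_const
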